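/- arXiv:2402.00899 — 2 statements merged into one kernel-verified Lean document; each statement's English description precedes it below -/
import Mathlib

section
/- Let Y_1, …, Y_m, Z be independent and identically distributed real-valued random variables, let G_m be the empirical cumulative distribution function of Y_1, …, Y_m, and let G_m^† denote its pseudo-inverse. Then for every Δ ∈ (0,1), the joint probability (over the sample Y_1, …, Y_m and Z) satisfies P(Z ≤ G_m^†(Δ)) ≥ ρ(Δ, m), where ρ(a, d) = sup_{ε ∈ (0,1]} max(a − ε, 0)·(1 − 2·exp(−2dε²)). -/
open MeasureTheory ProbabilityTheory
open scoped ENNReal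

/-- Empirical cumulative distribution function of the sample `x : Fin m → ℝ`. -/
noncomputable def ecdf {m : ℕ} (x : Fin m → ℝ) (s : ℝ) : ℝ :=
  (1 / m) * ∑ i, if x i ≤ s then (1 : ℝ) else 0

/-- Pseudo-inverse of a function `G : ℝ → ℝ`: `G†(y) = inf {x | G x ≥ y}`. -/
noncomputable def pinv (G : ℝ → ℝ) (y : ℝ) : ℝ :=
  sInf {x : ℝ | G x ≥ y}

/-- `ρ(a, d) = sup_{ε ∈ (0,1]} max(a - ε, 0) (1 - 2 exp(-2 d ε²))`. -/
noncomputable def rho (a : ℝ) (d : ℕ) : ℝ :=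
  ⨆ ε : Set.Ioc (0 : ℝ) 1, max (a - ε.1) 0 * (1 - 2 * Real.exp (-2 * d * ε.1 ^ 2))

lemma rho_le_aux (Δ : ℝ) (hΔ0 : 0 < Δ) (hΔ1 : Δ < 1) (m : ℕ) :
    rho Δ m ≤ Δ * m / (m + 1) := by
  have hne : Nonempty (Set.Ioc (0 : ℝ) 1) := ⟨⟨1, by norm_num⟩⟩
  have hm1 : (0 : ℝ) < (m : ℝ) + 1 := by positivity
  have hRHS : (0 : ℝ) ≤ Δ * m / (m + 1) := by positivity
  refine ciSup_le fun ⟨ε, hε0, hε1⟩ => ?_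
  simp only
  set t := 1 - 2 * Real.exp (-2 * (m : ℝ) * ε ^ 2) with ht
  rcases le_or_gt t 0 with h | h
  · exact le_trans (mul_nonpos_of_nonneg_of_nonpos (le_max_right _ _) h) hRHS
  · have ht1 : t ≤ 1 := by
      have := Real.exp_pos (-2 * (m : ℝ) * ε ^ 2); linarith
    have hεge : 1 / ((m : ℝ) + 1) ≤ ε := by
      by_contra hlt
      push_neg at hlt
      have hlt' : ε * ((m : ℝ) + 1) < 1 := by
        rw [lt_div_iff₀ hm1] at hlt
        exact hlt
      have ha : 2 * (m : ℝ) * ε ^ 2 ≤ 1 / 2 := by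
        have h1 : (ε * ((m : ℝ) + 1)) ^ 2 ≤ 1 := by
          nlinarith [mul_pos hε0 hm1]
        nlinarith [sq_nonneg ((m : ℝ) - 1), sq_nonneg ε]
      have hE := Real.add_one_le_exp (-(2 * (m : ℝ) * ε ^ 2))
      have : Real.exp (-2 * (m : ℝ) * ε ^ 2) ≥ 1 / 2 := by
        have hexp : Real.exp (-2 * (m : ℝ) * ε ^ 2)
            = Real.exp (-(2 * (m : ℝ) * ε ^ 2)) := by ring_nf
        rw [hexp]; linarith
      linarith
    have hmax : max (Δ - ε) 0 ≤ Δ * m / (m + 1) := by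
      refine max_le ?_ hRHS
      have heq : Δ * m / (m + 1) = Δ - Δ / ((m : ℝ) + 1) := by
        field_simp
        ring
      rw [heq]
      have : Δ / ((m : ℝ) + 1) ≤ 1 / ((m : ℝ) + 1) := by
        gcongr
      linarith [le_trans this hεge]
    calc max (Δ - ε) 0 * t ≤ max (Δ - ε) 0 * 1 :=
          mul_le_mul_of_nonneg_left ht1 (le_max_right _ _)
      _ = max (Δ - ε) 0 := mul_one _
      _ ≤ Δ * m / (m + 1) := hmax

noncomputable def cnt {ι : Type*} [Fintype ι] (x : ι → ℝ) (j : ι) : ℕ :=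
  (Finset.univ.filter fun i => x i < x j).card

lemma measurable_cnt {ι : Type*} [Fintype ι] (j : ι) :
    Measurable (fun x : ι → ℝ => cnt x j) := by
  unfold cnt
  simp_rw [Finset.card_filter]
  exact Finset.measurable_sum _ fun i _ =>
    Measurable.ite (measurableSet_lt (measurable_pi_apply i) (measurable_pi_apply j))
      measurable_const measurable_const

lemma count_lemma {ι : Type*} [Fintype ι] (x : ι → ℝ) (k : ℕ) (hk1 : 1 ≤ k)
    (hk : k ≤ Fintype.card ι) :
    k ≤ (Finset.univ.filter fun j => cnt x j < k).card := by
  classical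
  have hcard : 0 < Fintype.card ι := lt_of_lt_of_le hk1 hk
  have hne : (Finset.univ : Finset ι).Nonempty := Finset.univ_nonempty_iff.2
    (Fintype.card_pos_iff.1 hcard)
  have hneim : (Finset.univ.image x).Nonempty := hne.image x
  set T : Finset ℝ :=
    (Finset.univ.image x).filter (fun v => k ≤ (Finset.univ.filter fun i => x i ≤ v).card)
    with hTdef
  have hT : T.Nonempty := by
    refine ⟨(Finset.univ.image x).max' hneim, Finset.mem_filter.2 ⟨Finset.max'_mem _ _, ?_⟩⟩
    have : (Finset.univ.filter fun i => x i ≤ (Finset.univ.image x).max' hneim) =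
        Finset.univ := by
      apply Finset.filter_true_of_mem
      intro i _
      exact Finset.le_max' _ _ (Finset.mem_image_of_mem x (Finset.mem_univ i))
    rw [this, Finset.card_univ]; exact hk
  set v : ℝ := T.min' hT with hv
  have hv1 : k ≤ (Finset.univ.filter fun i => x i ≤ v).card :=
    (Finset.mem_filter.1 (T.min'_mem hT)).2
  have hv2 : (Finset.univ.filter fun i => x i < v).card < k := by
    by_contra h
    push_neg at h
    have hBne : (Finset.univ.filter fun i => x i < v).Nonempty :=
      Finset.card_pos.1 (lt_of_lt_of_le hk1 h)
    have hBneim := hBne.image x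
    set w : ℝ := ((Finset.univ.filter fun i => x i < v).image x).max' hBneim with hw
    obtain ⟨i0, hi0, hxi0⟩ := Finset.mem_image.1 (Finset.max'_mem _ hBneim)
    have hwv : w < v := by rw [hw, ← hxi0]; exact (Finset.mem_filter.1 hi0).2
    have hwT : w ∈ T := by
      refine Finset.mem_filter.2 ⟨?_, ?_⟩
      · rw [hw, ← hxi0]; exact Finset.mem_image_of_mem x (Finset.mem_univ i0)
      refine le_trans h (Finset.card_le_card ?_)
      intro i hi
      refine Finset.mem_filter.2 ⟨Finset.mem_univ i, ?_⟩
      exact Finset.le_max' _ _ (Finset.mem_image_of_mem x hi)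
    exact absurd (Finset.min'_le T w hwT) (not_le.2 hwv)
  refine le_trans hv1 (Finset.card_le_card ?_)
  intro j hj
  have hjv : x j ≤ v := (Finset.mem_filter.1 hj).2
  refine Finset.mem_filter.2 ⟨Finset.mem_univ j, ?_⟩
  refine lt_of_le_of_lt ?_ hv2
  unfold cnt
  refine Finset.card_le_card ?_
  intro i hi
  exact Finset.mem_filter.2 ⟨Finset.mem_univ i,
    lt_of_lt_of_le (Finset.mem_filter.1 hi).2 hjv⟩

lemma measurePreserving_comp_perm {ι : Type*} [Fintype ι] (e : ι ≃ ι) (μ : Measure ℝ)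
    [IsProbabilityMeasure μ] :
    MeasurePreserving (fun x : ι → ℝ => x ∘ e)
      (Measure.pi fun _ => μ) (Measure.pi fun _ => μ) := by
  have hmeas : Measurable (fun x : ι → ℝ => x ∘ e) :=
    measurable_pi_lambda _ fun i => measurable_pi_apply (e i)
  refine ⟨hmeas, ?_⟩
  refine (Measure.pi_eq fun s hs => ?_).symm
  rw [Measure.map_apply hmeas (MeasurableSet.univ_pi hs)]
  have hpre : (fun x : ι → ℝ => x ∘ e) ⁻¹' Set.pi Set.univ s
      = Set.pi Set.univ (fun j => s (e.symm j)) := by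
    ext x
    simp only [Set.mem_preimage, Set.mem_pi, Set.mem_univ, forall_true_left, Function.comp]
    constructor
    · intro h j; have := h (e.symm j); rwa [e.apply_symm_apply] at this
    · intro h i; have := h (e i); rwa [e.symm_apply_apply] at this
  rw [hpre, Measure.pi_pi]
  exact Fintype.prod_equiv e.symm _ _ fun j => rfl

lemma map_joint {ι : Type*} [Fintype ι] {Ω : Type*} [MeasurableSpace Ω] (P : Measure Ω)
    [IsProbabilityMeasure P] (X : ι → Ω → ℝ) (hX : ∀ i, Measurable (X i))
    (hind : iIndepFun X P) (μ : Measure ℝ) [IsProbabilityMeasure μ]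
    (hid : ∀ i, P.map (X i) = μ) :
    P.map (fun ω i => X i ω) = Measure.pi fun _ => μ := by
  have hf : Measurable (fun ω i => X i ω) := measurable_pi_lambda _ hX
  refine (Measure.pi_eq fun s hs => ?_).symm
  rw [Measure.map_apply hf (MeasurableSet.univ_pi hs)]
  have hpre : (fun ω i => X i ω) ⁻¹' Set.pi Set.univ s = ⋂ i, X i ⁻¹' s i := by
    ext ω; simp [Set.mem_pi]
  rw [hpre, hind.meas_iInter fun i => ⟨s i, hs i, rfl⟩]
  refine Finset.prod_congr rfl fun i _ => ?_
  rw [← hid i, Measure.map_apply (hX i) (hs i)]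

lemma pi_cnt_bound {ι : Type*} [Fintype ι] (μ : Measure ℝ) [IsProbabilityMeasure μ] (j₀ : ι)
    (k : ℕ) (hk1 : 1 ≤ k) (hk : k ≤ Fintype.card ι) :
    (k : ℝ≥0∞) / (Fintype.card ι : ℝ≥0∞)
      ≤ Measure.pi (fun _ : ι => μ) {x | cnt x j₀ < k} := by
  classical
  set ν := Measure.pi (fun _ : ι => μ) with hν
  have hA : ∀ j : ι, MeasurableSet {x : ι → ℝ | cnt x j < k} := fun j =>
    measurableSet_lt (measurable_cnt j) measurable_const
  have key : ∀ j : ι, ν {x | cnt x j < k} = ν {x | cnt x j₀ < k} := by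
    intro j
    set e := Equiv.swap j₀ j with he
    have hmp := measurePreserving_comp_perm e μ
    have hcnt : ∀ x : ι → ℝ, cnt (x ∘ e) j₀ = cnt x (e j₀) := by
      intro x
      unfold cnt
      rw [Finset.card_filter, Finset.card_filter]
      exact Fintype.sum_equiv e _ _ fun i => rfl
    have hpre : (fun x : ι → ℝ => x ∘ e) ⁻¹' {x | cnt x j₀ < k}
        = {x | cnt x (e j₀) < k} := by
      ext x
      simp only [Set.mem_preimage, Set.mem_setOf_eq, hcnt]
    calc ν {x | cnt x j < k} = ν {x | cnt x (e j₀) < k} := by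
          rw [he, Equiv.swap_apply_left]
      _ = ν ((fun x : ι → ℝ => x ∘ e) ⁻¹' {x | cnt x j₀ < k}) := by rw [hpre]
      _ = (ν.map fun x : ι → ℝ => x ∘ e) {x | cnt x j₀ < k} :=
          (Measure.map_apply hmp.measurable (hA j₀)).symm
      _ = ν {x | cnt x j₀ < k} := by rw [hmp.map_eq]
  have hsum : (k : ℝ≥0∞) ≤ ∑ j : ι, ν {x | cnt x j < k} := by
    have h1 : ∀ j : ι, ν {x | cnt x j < k}
        = ∫⁻ x, Set.indicator {x : ι → ℝ | cnt x j < k} (fun _ => 1) x ∂ν := fun j =>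
      (lintegral_indicator_one (hA j)).symm
    simp_rw [h1]
    rw [← lintegral_finset_sum _ fun j _ => measurable_const.indicator (hA j)]
    have h2 : (k : ℝ≥0∞) = ∫⁻ _x, (k : ℝ≥0∞) ∂ν := by simp
    rw [h2]
    refine lintegral_mono fun x => ?_
    have h3 : ∑ j : ι, Set.indicator {x : ι → ℝ | cnt x j < k} (fun _ => (1 : ℝ≥0∞)) x
        = ((Finset.univ.filter fun j => cnt x j < k).card : ℝ≥0∞) := by
      rw [← Finset.sum_boole]
      refine Finset.sum_congr rfl fun j _ => ?_
      simp [Set.indicator_apply]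
    rw [h3]
    exact Nat.cast_le.2 (count_lemma x k hk1 hk)
  have hsum2 : ∑ j : ι, ν {x | cnt x j < k}
      = (Fintype.card ι : ℝ≥0∞) * ν {x | cnt x j₀ < k} := by
    rw [Finset.sum_congr rfl fun j _ => key j, Finset.sum_const, Finset.card_univ,
      nsmul_eq_mul]
  rw [hsum2] at hsum
  rw [ENNReal.div_le_iff_le_mul (Or.inl ?_) (Or.inl ?_)]
  · rw [mul_comm] at hsum; exact hsum
  · have hpos : 0 < Fintype.card ι := lt_of_lt_of_le hk1 hk
    exact Nat.cast_ne_zero.2 hpos.ne'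
  · exact ENNReal.natCast_ne_top _

/-- A fresh i.i.d. sample falls at or below the empirical `Δ`-quantile of the
training sample with probability at least `ρ(Δ, m)`. -/
theorem stmt4 {Ω : Type*} [MeasurableSpace Ω] (P : Measure Ω) [IsProbabilityMeasure P]
    {m : ℕ} (Y : Fin m → Ω → ℝ) (Z : Ω → ℝ)
    (hmY : ∀ i, Measurable (Y i)) (hmZ : Measurable Z)
    (hindep : iIndepFun (Sum.elim Y fun _ : Unit => Z) P)
    (hident : ∀ i, Measure.map (Y i) P = Measure.map Z P)
    (Δ : ℝ) (hΔ : Δ ∈ Set.Ioo (0 : ℝ) 1) :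
    (P {ω | Z ω ≤ pinv (ecdf fun i => Y i ω) Δ}).toReal ≥ rho Δ m := by
  classical
  obtain ⟨hΔ0, hΔ1⟩ := hΔ
  have hrho : rho Δ m ≤ Δ * m / (m + 1) := rho_le_aux Δ hΔ0 hΔ1 m
  rcases Nat.eq_zero_or_pos m with hm | hm
  · subst hm
    refine le_trans (le_trans hrho (by norm_num)) ENNReal.toReal_nonneg
  -- setup
  set X : Fin m ⊕ Unit → Ω → ℝ := Sum.elim Y fun _ : Unit => Z with hX
  have hmX : ∀ j, Measurable (X j) := by rintro (i | u); exacts [hmY i, hmZ]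
  set μ : Measure ℝ := P.map Z with hμ
  haveI : IsProbabilityMeasure μ := Measure.isProbabilityMeasure_map hmZ.aemeasurable
  have hid : ∀ j, P.map (X j) = μ := by rintro (i | u); exacts [hident i, rfl]
  have hjoint : P.map (fun ω j => X j ω) = Measure.pi fun _ => μ :=
    map_joint P X hmX hindep μ hid
  set k : ℕ := ⌈Δ * m⌉₊ with hk
  have hmR : (0 : ℝ) < m := by exact_mod_cast hm
  have hk1 : 1 ≤ k := Nat.ceil_pos.2 (by positivity)
  have hkm : k ≤ m := Nat.ceil_le.2 (by nlinarith)
  have hcard : Fintype.card (Fin m ⊕ Unit) = m + 1 := by simp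
  set j₀ : Fin m ⊕ Unit := Sum.inr () with hj₀
  have hbound := pi_cnt_bound μ j₀ k hk1 (by rw [hcard]; omega)
  have hf : Measurable (fun ω j => X j ω) := measurable_pi_lambda _ hmX
  have hAm : MeasurableSet {x : Fin m ⊕ Unit → ℝ | cnt x j₀ < k} :=
    measurableSet_lt (measurable_cnt j₀) measurable_const
  have hPE : Measure.pi (fun _ : Fin m ⊕ Unit => μ) {x | cnt x j₀ < k}
      = P {ω | cnt (fun j => X j ω) j₀ < k} := by
    rw [← hjoint, Measure.map_apply hf hAm]
    rfl
  -- the count over the sum type equals the count over `Fin m`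
  have hcnt_eq : ∀ ω, cnt (fun j => X j ω) j₀
      = (Finset.univ.filter fun i : Fin m => Y i ω < Z ω).card := by
    intro ω
    unfold cnt
    rw [Finset.card_filter, Finset.card_filter, Fintype.sum_sum_type]
    simp [hj₀, hX]
  -- inclusion of events
  have hsub : {ω | cnt (fun j => X j ω) j₀ < k}
      ⊆ {ω | Z ω ≤ pinv (ecdf fun i => Y i ω) Δ} := by
    intro ω hω
    simp only [Set.mem_setOf_eq] at hω ⊢
    rw [hcnt_eq ω] at hω
    have hune : (Finset.univ : Finset (Fin m)).Nonempty :=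
      Finset.univ_nonempty_iff.2 (Fin.pos_iff_nonempty.1 hm)
    unfold pinv
    refine le_csInf ?_ ?_
    · -- the set is nonempty: the max of the sample belongs to it
      refine ⟨(Finset.univ.image fun i => Y i ω).max' (hune.image _), ?_⟩
      have hall : ∀ i : Fin m,
          Y i ω ≤ (Finset.univ.image fun i => Y i ω).max' (hune.image _) := fun i =>
        Finset.le_max' (Finset.univ.image fun i => Y i ω) (Y i ω)
          (Finset.mem_image_of_mem _ (Finset.mem_univ i))
      show ecdf (fun i => Y i ω) _ ≥ Δ
      unfold ecdf
      have hsum : (∑ i : Fin m, if Y i ω ≤ (Finset.univ.image fun i => Y i ω).max'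
          (hune.image _) then (1 : ℝ) else 0) = m := by
        rw [Finset.sum_congr rfl fun i _ => if_pos (hall i)]
        simp
      rw [hsum, one_div, inv_mul_cancel₀ (ne_of_gt hmR)]
      exact hΔ1.le
    · -- `Z ω` is a lower bound of the set
      intro s hs
      have hs' : Δ ≤ (1 / m) * ∑ i : Fin m, if Y i ω ≤ s then (1 : ℝ) else 0 := hs
      have hcard_s : (Δ * m) ≤ ((Finset.univ.filter fun i : Fin m => Y i ω ≤ s).card : ℝ) := by
        rw [← Finset.sum_boole]
        have h3 : (1 / (m : ℝ)) * (∑ i : Fin m, if Y i ω ≤ s then (1 : ℝ) else 0)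
            = (∑ i : Fin m, if Y i ω ≤ s then (1 : ℝ) else 0) / m := by ring
        rw [h3, le_div_iff₀ hmR] at hs'
        exact hs'
      have hks : k ≤ (Finset.univ.filter fun i : Fin m => Y i ω ≤ s).card :=
        Nat.ceil_le.2 hcard_s
      by_contra hzs
      push_neg at hzs
      have hsubset : (Finset.univ.filter fun i : Fin m => Y i ω ≤ s)
          ⊆ (Finset.univ.filter fun i : Fin m => Y i ω < Z ω) := by
        intro i hi
        exact Finset.mem_filter.2 ⟨Finset.mem_univ i,
          lt_of_le_of_lt (Finset.mem_filter.1 hi).2 hzs⟩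
      exact absurd (le_trans hks (Finset.card_le_card hsubset)) (not_le.2 hω)
  -- conclude
  have hmono : P {ω | cnt (fun j => X j ω) j₀ < k}
      ≤ P {ω | Z ω ≤ pinv (ecdf fun i => Y i ω) Δ} := measure_mono hsub
  have hE : ((k : ℝ≥0∞) / ((m : ℝ≥0∞) + 1)) ≤ P {ω | Z ω ≤ pinv (ecdf fun i => Y i ω) Δ} := by
    refine le_trans ?_ (le_trans (hPE ▸ hbound) hmono)
    rw [hcard]
    push_cast
    exact le_refl _
  have htR : ((k : ℝ) / ((m : ℝ) + 1)) ≤ (P {ω | Z ω ≤ pinv (ecdf fun i => Y i ω) Δ}).toReal := by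
    have h1 := ENNReal.toReal_mono (measure_ne_top P _) hE
    rwa [ENNReal.toReal_div, ENNReal.toReal_add (by simp) (by simp), ENNReal.toReal_natCast,
      ENNReal.toReal_natCast, ENNReal.toReal_one] at h1
  refine le_trans hrho (le_trans ?_ htR)
  have : Δ * m ≤ (k : ℝ) := Nat.le_ceil _
  gcongr
end

section
/- Let U be a measurable space, L a finite set (with the discrete σ-algebra), F: U → L and Φ: U → ℝ^d measurable maps, h: ℝ^d → ℝ a measurable map, and P_D a probability measure on U × L. Fix ℓ_j ∈ L such that both events B_- = {(u, y) : F(u) = ℓ_j, y ≠ ℓ_j} and B_+ = {(u, y) : F(u) = ℓ_j, y = ℓ_j} have positive P_D-measure. Let (V_1, W_1), …, (V_m, W_m) be independent samples from P_D(· | B_-) with empirical cumulative distribution function G_m of h(Φ(V_1)), …, h(Φ(V_m)), let (U_1, Y_1), …, (U_p, Y_p) be independent samples from P_D(· | B_+) (independent of the first sample) with empirical cumulative distribution function F_p of h(Φ(U_1)), …, h(Φ(U_p)), and set θ = G_m^†(Δ) for Δ ∈ (0,1). Let P_c^+ denote the cumulative distribution function of h(Φ(u')) where (u', y') ∼ P_D(·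 | B_+). Then for every ε ∈ (0,1], with probability at least 1 − 2·exp(−2pε²) over both training samples, one has P_c^+(θ) ≤ min(1, F_p(θ) + ε); equivalently, the conditional probability that a fresh independent sample (u, ℓ) ∼ P_D with F(u) = ℓ_j and ℓ = ℓ_j satisfies h(Φ(u)) > θ, given the training samples, is at least 1 − min(1, F_p(θ) + ε). -/
open MeasureTheory ProbabilityTheory

/-- Bernoulli mgf bound (Hoeffding's lemma for Bernoulli). -/
lemma bern_mgf_bound {q : ℝ} (hq0 : 0 ≤ q) (hq1 : q ≤ 1) (t : ℝ) :
    1 - q + q * Real.exp t ≤ Real.exp (q * t + t ^ 2 / 8) := by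
  have hD : ∀ x : ℝ, 0 < 1 - q + q * Real.exp x := by
    intro x
    rcases lt_or_eq_of_le hq1 with h | h
    · have := mul_nonneg hq0 (Real.exp_pos x).le; linarith
    · subst h; simpa using Real.exp_pos x
  set D : ℝ → ℝ := fun x => 1 - q + q * Real.exp x with hDdef
  set f : ℝ → ℝ := fun x => q * x + x ^ 2 / 8 - Real.log (D x) with hfdef
  set f' : ℝ → ℝ := fun x => q + x / 4 - q * Real.exp x / D x with hf'def
  have hDd : ∀ x, HasDerivAt D (q * Real.exp x) x := by
    intro x
    exact ((Real.hasDerivAt_exp x).const_mul q).const_add (1 - q)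
  have hfd : ∀ x, HasDerivAt f (f' x) x := by
    intro x
    have h1 : HasDerivAt (fun x => Real.log (D x)) (q * Real.exp x / D x) x :=
      (hDd x).log (hD x).ne'
    have hid : HasDerivAt (fun x : ℝ => q * x) q x := by
      simpa using (hasDerivAt_id x).const_mul q
    have hsq : HasDerivAt (fun x : ℝ => x ^ 2 / 8) (x / 4) x := by
      have h3 := (hasDerivAt_pow 2 x).div_const 8
      refine h3.congr_deriv ?_
      ring
    exact (hid.add hsq).sub h1
  have hf'd : ∀ x, HasDerivAt f'
      (1 / 4 - (q * Real.exp x * D x - q * Real.exp x * (q * Real.exp x)) / D x ^ 2) x := by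
    intro x
    have h1 : HasDerivAt (fun x => q * Real.exp x / D x)
        ((q * Real.exp x * D x - q * Real.exp x * (q * Real.exp x)) / D x ^ 2) x :=
      ((Real.hasDerivAt_exp x).const_mul q).div (hDd x) (hD x).ne'
    have h2 : HasDerivAt (fun x : ℝ => q + x / 4) (1 / 4) x := by
      simpa using ((hasDerivAt_id x).div_const 4).const_add q
    exact h2.sub h1
  have hf'nonneg : ∀ x, 0 ≤ 1 / 4 -
      (q * Real.exp x * D x - q * Real.exp x * (q * Real.exp x)) / D x ^ 2 := by
    intro x
    set g : ℝ := q * Real.exp x / D x with hg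
    have hDx := hD x
    have hkey : (q * Real.exp x * D x - q * Real.exp x * (q * Real.exp x)) / D x ^ 2
        = g - g ^ 2 := by
      have hDx0 : D x ≠ 0 := hDx.ne'
      rw [hg]
      field_simp
    rw [hkey]
    nlinarith [sq_nonneg (g - 1 / 2)]
  have hmono : Monotone f' := by
    apply monotone_of_deriv_nonneg
    · exact fun x => (hf'd x).differentiableAt
    · intro x; rw [(hf'd x).deriv]; exact hf'nonneg x
  have hf'0 : f' 0 = 0 := by
    simp only [hf'def]
    rw [Real.exp_zero]
    have : D 0 = 1 := by simp [hDdef]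
    rw [this]
    ring
  have hf0 : f 0 = 0 := by
    have : D 0 = 1 := by simp [hDdef]
    simp [hfdef, this]
  have hfdiff : Differentiable ℝ f := fun x => (hfd x).differentiableAt
  have hfnonneg : ∀ x, 0 ≤ f x := by
    intro x
    rcases le_total 0 x with hx | hx
    · have hmOn : MonotoneOn f (Set.Ici (0 : ℝ)) := by
        apply monotoneOn_of_deriv_nonneg (convex_Ici 0) hfdiff.continuous.continuousOn
          (fun y _ => (hfdiff y).differentiableWithinAt)
        intro y hy
        rw [(hfd y).deriv]
        rw [interior_Ici] at hy
        calc (0 : ℝ) = f' 0 := hf'0.symm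
          _ ≤ f' y := hmono hy.le
      calc (0 : ℝ) = f 0 := hf0.symm
        _ ≤ f x := hmOn Set.self_mem_Ici hx hx
    · have haOn : AntitoneOn f (Set.Iic (0 : ℝ)) := by
        apply antitoneOn_of_deriv_nonpos (convex_Iic 0) hfdiff.continuous.continuousOn
          (fun y _ => (hfdiff y).differentiableWithinAt)
        intro y hy
        rw [(hfd y).deriv]
        rw [interior_Iic] at hy
        calc f' y ≤ f' 0 := hmono hy.le
          _ = 0 := hf'0
      calc (0 : ℝ) = f 0 := hf0.symm
        _ ≤ f x := haOn hx Set.self_mem_Iic hx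
  have := hfnonneg t
  have hlog : Real.log (D t) ≤ q * t + t ^ 2 / 8 := by
    simp only [hfdef] at this; linarith
  calc D t = Real.exp (Real.log (D t)) := (Real.exp_log (hD t)).symm
    _ ≤ Real.exp (q * t + t ^ 2 / 8) := Real.exp_le_exp.mpr hlog

lemma hoeffding_slice {α : Type*} [MeasurableSpace α] (ν : Measure α) [IsProbabilityMeasure ν]
    {p : ℕ} (hp : 0 < p) {g : α → ℝ} (hg : Measurable g) (c ε : ℝ) (hε : 0 < ε) :
    (Measure.pi fun _ : Fin p => ν) {s | ecdf (fun i => g (s i)) c + ε < (ν {x | g x ≤ c}).toReal}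
      ≤ ENNReal.ofReal (Real.exp (-2 * p * ε ^ 2)) := by
  letI : MeasureSpace α := ⟨ν⟩
  haveI : IsProbabilityMeasure (volume : Measure α) := ‹IsProbabilityMeasure ν›
  have hpi : (Measure.pi fun _ : Fin p => ν) = (volume : Measure (Fin p → α)) := rfl
  rw [hpi]
  set A : Set α := {x | g x ≤ c} with hA
  have hAm : MeasurableSet A := hg measurableSet_Iic
  set q : ℝ := (ν A).toReal with hq
  have hq0 : 0 ≤ q := ENNReal.toReal_nonneg
  have hq1 : q ≤ 1 := by
    rw [hq]
    exact ENNReal.toReal_le_of_le_ofReal one_pos.le (by simpa using prob_le_one (μ := ν) (s := A))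
  set l : ℝ := 4 * ε with hl
  have hl0 : 0 < l := by positivity
  set X : α → ℝ := fun x => if g x ≤ c then 1 else 0 with hX
  set hfac : α → ℝ := fun x => Real.exp (l * (q - X x)) with hhfac
  set f : (Fin p → α) → ℝ := fun s => Real.exp (l * (∑ i, (q - X (s i))) - l * p * ε) with hf
  -- measurability
  have hXm : Measurable X := by
    apply Measurable.ite hAm <;> exact measurable_const
  have hfacm : Measurable hfac := by
    apply Real.measurable_exp.comp
    exact (measurable_const.sub hXm).const_mul l
  have hfm : Measurable f := by
    apply Real.measurable_exp.comp
    apply Measurable.sub _ measurable_const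
    apply Measurable.const_mul
    exact Finset.measurable_sum _ fun i _ =>
      measurable_const.sub (hXm.comp (measurable_pi_apply i))
  -- event inclusion
  have hsub : {s : Fin p → α | ecdf (fun i => g (s i)) c + ε < q}
      ⊆ {s | (1 : ENNReal) ≤ ENNReal.ofReal (f s)} := by
    intro s hs
    simp only [Set.mem_setOf_eq] at hs ⊢
    rw [ENNReal.one_le_ofReal]
    rw [hf]
    apply Real.one_le_exp
    have hsum : ∑ i, (q - X (s i)) = p * q - ∑ i, X (s i) := by
      rw [Finset.sum_sub_distrib]
      simp [Finset.card_univ, mul_comm]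
    have hecdf : ecdf (fun i => g (s i)) c = (1 / p) * ∑ i, X (s i) := by
      simp [ecdf, hX]
    rw [hecdf] at hs
    have hp' : (0 : ℝ) < p := by exact_mod_cast hp
    have h2 : ∑ i, X (s i) + p * ε < p * q := by
      have h3 := (mul_lt_mul_iff_right₀ hp').mpr hs
      rw [mul_add] at h3
      rw [show (p:ℝ) * (1 / p * ∑ i, X (s i)) = ∑ i, X (s i) by field_simp] at h3
      exact h3
    rw [hsum]
    nlinarith
  -- integrability of hfac and its integral
  have hfaceq : hfac = fun x =>
      A.indicator (fun _ => Real.exp (l * (q - 1))) x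
      + Aᶜ.indicator (fun _ => Real.exp (l * q)) x := by
    funext x
    by_cases hx : x ∈ A
    · have hx' : g x ≤ c := hx
      simp [hhfac, hX, Set.indicator_of_mem hx,
        Set.indicator_of_notMem (Set.notMem_compl_iff.mpr hx), hx']
    · have hx' : ¬ g x ≤ c := hx
      simp [hhfac, hX, Set.indicator_of_notMem hx, Set.indicator_of_mem (Set.mem_compl hx), hx']
  have hfacint : Integrable hfac ν := by
    rw [hfaceq]
    exact ((integrable_const _).indicator hAm).add ((integrable_const _).indicator hAm.compl)
  have hcompl : (ν Aᶜ).toReal = 1 - q := by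
    rw [hq, measure_compl hAm (measure_ne_top ν A)]
    rw [ENNReal.toReal_sub_of_le (measure_mono (Set.subset_univ A)) (measure_ne_top ν _)]
    simp
  have hfacintval : ∫ x, hfac x ∂ν = q * Real.exp (l * (q - 1)) + (1 - q) * Real.exp (l * q) := by
    rw [hfaceq]
    rw [integral_add ((integrable_const _).indicator hAm) ((integrable_const _).indicator hAm.compl)]
    rw [integral_indicator_const _ hAm, integral_indicator_const _ hAm.compl]
    rw [measureReal_def, measureReal_def, hcompl, ← hq]
    simp [smul_eq_mul]
  have hfacbound : ∫ x, hfac x ∂ν ≤ Real.exp (l ^ 2 / 8) := by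
    rw [hfacintval]
    have hb := bern_mgf_bound hq0 hq1 (-l)
    have hmul := mul_le_mul_of_nonneg_left hb (Real.exp_pos (l * q)).le
    calc q * Real.exp (l * (q - 1)) + (1 - q) * Real.exp (l * q)
        = Real.exp (l * q) * (1 - q + q * Real.exp (-l)) := by
          rw [show l * (q - 1) = l * q + (-l) by ring, Real.exp_add]
          ring
      _ ≤ Real.exp (l * q) * Real.exp (q * (-l) + (-l) ^ 2 / 8) := hmul
      _ = Real.exp (l ^ 2 / 8) := by
          rw [← Real.exp_add]
          ring_nf
  have hfacnonneg : ∀ x, 0 ≤ hfac x := fun x => (Real.exp_pos _).le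
  have hfacint0 : 0 ≤ ∫ x, hfac x ∂ν := integral_nonneg hfacnonneg
  -- product structure of f
  have hfeq : f = fun s => Real.exp (-(l * p * ε)) * ∏ i, hfac (s i) := by
    funext s
    rw [hf, hhfac]
    simp only []
    rw [← Real.exp_sum]
    rw [← Real.exp_add, Finset.mul_sum]
    congr 1
    ring
  have hfint : Integrable f (volume : Measure (Fin p → α)) := by
    rw [hfeq]
    exact (Integrable.fintype_prod (f := fun _ : Fin p => hfac) fun i => hfacint).const_mul _
  have hfintval : ∫ s, f s = Real.exp (-(l * p * ε)) * (∫ x, hfac x ∂ν) ^ p := by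
    rw [hfeq, integral_const_mul]
    congr 1
    have := integral_fintype_prod_eq_pow (ι := Fin p) (μ := ν) hfac
    simpa [Fintype.card_fin, hpi] using this
  have hfbound : ∫ s, f s ≤ Real.exp (-2 * p * ε ^ 2) := by
    rw [hfintval]
    calc Real.exp (-(l * p * ε)) * (∫ x, hfac x ∂ν) ^ p
        ≤ Real.exp (-(l * p * ε)) * (Real.exp (l ^ 2 / 8)) ^ p := by
          apply mul_le_mul_of_nonneg_left _ (Real.exp_pos _).le
          exact pow_le_pow_left₀ hfacint0 hfacbound p
      _ = Real.exp (-(l * p * ε) + p * (l ^ 2 / 8)) := by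
          rw [← Real.exp_nat_mul, ← Real.exp_add]
      _ = Real.exp (-2 * p * ε ^ 2) := by
          congr 1
          rw [hl]
          ring
  -- chain
  calc (volume : Measure (Fin p → α)) {s | ecdf (fun i => g (s i)) c + ε < q}
      ≤ (volume : Measure (Fin p → α)) {s | (1:ENNReal) ≤ ENNReal.ofReal (f s)} :=
        measure_mono hsub
    _ ≤ ∫⁻ s, ENNReal.ofReal (f s) := by
        have := mul_meas_ge_le_lintegral₀
          (μ := (volume : Measure (Fin p → α)))
          (f := fun s => ENNReal.ofReal (f s))
          (ENNReal.measurable_ofReal.comp hfm).aemeasurable 1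
        simpa using this
    _ = ENNReal.ofReal (∫ s, f s) := by
        rw [ofReal_integral_eq_lintegral_ofReal hfint
          (Filter.Eventually.of_forall fun s => (Real.exp_pos _).le)]
    _ ≤ ENNReal.ofReal (Real.exp (-2 * p * ε ^ 2)) := ENNReal.ofReal_le_ofReal hfbound

lemma ecdf_mono {m : ℕ} (a : Fin m → ℝ) : Monotone (ecdf a) := by
  intro x y hxy
  unfold ecdf
  apply mul_le_mul_of_nonneg_left _ (by positivity)
  apply Finset.sum_le_sum
  intro i _
  split_ifs with h1 h2
  · exact le_refl 1
  · exact absurd (h1.trans hxy) h2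
  · exact zero_le_one
  · exact le_refl 0

lemma pinv_ecdf_le_iff {m : ℕ} (hm : 0 < m) (a : Fin m → ℝ) {Δ : ℝ}
    (h0 : 0 < Δ) (h1 : Δ ≤ 1) (c : ℝ) :
    pinv (ecdf a) Δ ≤ c ↔ ∀ r : ℚ, c < (r : ℝ) → Δ ≤ ecdf a r := by
  haveI : Nonempty (Fin m) := ⟨⟨0, hm⟩⟩
  set S : Set ℝ := {x | ecdf a x ≥ Δ} with hS
  have hMne : (Finset.univ : Finset (Fin m)).Nonempty := Finset.univ_nonempty
  have hne : S.Nonempty := by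
    refine ⟨Finset.univ.sup' hMne a, ?_⟩
    have hle : ∀ i, a i ≤ Finset.univ.sup' hMne a := fun i => Finset.le_sup' a (Finset.mem_univ i)
    have : ecdf a (Finset.univ.sup' hMne a) = 1 := by
      unfold ecdf
      rw [Finset.sum_congr rfl fun i _ => if_pos (hle i)]
      rw [Finset.sum_const, Finset.card_univ, Fintype.card_fin]
      field_simp
      simp
    simpa [hS, this] using h1
  have hbdd : BddBelow S := by
    refine ⟨Finset.univ.inf' hMne a, ?_⟩
    intro x hx
    by_contra hlt
    push_neg at hlt
    have hnone : ∀ i, ¬ a i ≤ x := fun i =>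
      not_le.mpr (lt_of_lt_of_le hlt (Finset.inf'_le a (Finset.mem_univ i)))
    have : ecdf a x = 0 := by
      unfold ecdf
      rw [Finset.sum_congr rfl fun i _ => if_neg (hnone i)]
      simp
    have hx' : Δ ≤ ecdf a x := hx
    rw [this] at hx'
    linarith
  constructor
  · intro h r hr
    have : sInf S < (r : ℝ) := lt_of_le_of_lt h hr
    obtain ⟨x, hxS, hxr⟩ := (csInf_lt_iff hbdd hne).mp this
    exact le_trans hxS (ecdf_mono a hxr.le)
  · intro h
    by_contra hc
    push_neg at hc
    obtain ⟨r, hr1, hr2⟩ := exists_rat_btwn hc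
    have : (r : ℝ) ∈ S := h r hr1
    exact absurd (csInf_le hbdd this) (not_le.mpr hr2)

lemma measurable_pinv_ecdf {β : Type*} [MeasurableSpace β] {m : ℕ} (a : Fin m → β → ℝ)
    (ha : ∀ i, Measurable (a i)) {Δ : ℝ} (h0 : 0 < Δ) (h1 : Δ ≤ 1) :
    Measurable fun t => pinv (ecdf fun i => a i t) Δ := by
  rcases Nat.eq_zero_or_pos m with hm | hm
  · subst hm
    have : (fun t => pinv (ecdf fun i => a i t) Δ) = fun _ => (0 : ℝ) := by
      funext t
      unfold pinv ecdf
      have : {x : ℝ | (1 / (0:ℕ) : ℝ) * ∑ i : Fin 0, (if a i t ≤ x then (1:ℝ) else 0) ≥ Δ}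
          = ∅ := by
        ext x
        simp [not_le.mpr h0]
      rw [this, Real.sInf_empty]
    rw [this]
    exact measurable_const
  · have hemeas : ∀ r : ℚ, Measurable fun t => ecdf (fun i => a i t) (r : ℝ) := by
      intro r
      unfold ecdf
      apply Measurable.const_mul
      apply Finset.measurable_sum
      intro i _
      exact Measurable.ite ((ha i) measurableSet_Iic) measurable_const measurable_const
    apply measurable_of_Iic
    intro c
    have : (fun t => pinv (ecdf fun i => a i t) Δ) ⁻¹' Set.Iic c
        = ⋂ (r : ℚ), ⋂ (_ : c < (r : ℝ)), {t | Δ ≤ ecdf (fun i => a i t) (r : ℝ)} := by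
      ext t
      simp only [Set.mem_preimage, Set.mem_Iic, Set.mem_iInter, Set.mem_setOf_eq]
      exact pinv_ecdf_le_iff hm _ h0 h1 c
    rw [this]
    exact MeasurableSet.iInter fun r => MeasurableSet.iInter fun _ =>
      (hemeas r) measurableSet_Ici

section indep
variable {Ω α : Type*} [MeasurableSpace Ω] [MeasurableSpace α]
  (P : Measure Ω) {m p : ℕ} (T : Fin m → Ω → α) (S : Fin p → Ω → α)

lemma elim_measurable (hmT : ∀ i, Measurable (T i)) (hmS : ∀ i, Measurable (S i)) :
    ∀ i : Fin m ⊕ Fin p, Measurable (Sum.elim T S i) := by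
  intro i; cases i with
  | inl j => exact hmT j
  | inr j => exact hmS j

lemma map_Svec_eq_pi (hmT : ∀ i, Measurable (T i)) (hmS : ∀ i, Measurable (S i))
    (hindep : iIndepFun (Sum.elim T S) P)
    (ν : Measure α) [SigmaFinite ν]
    (hS : ∀ i, Measure.map (S i) P = ν) :
    Measure.map (fun ω i => S i ω) P = Measure.pi fun _ : Fin p => ν := by
  symm
  apply Measure.pi_eq
  intro sets hsets
  have hmSvec : Measurable fun ω (i : Fin p) => S i ω := measurable_pi_lambda _ hmS
  rw [Measure.map_apply hmSvec (MeasurableSet.univ_pi hsets)]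
  set sets' : ∀ _ : Fin m ⊕ Fin p, Set α := Sum.elim (fun _ => Set.univ) sets with hsets'
  set J : Finset (Fin m ⊕ Fin p) :=
    Finset.univ.map ⟨Sum.inr, Sum.inr_injective⟩ with hJ
  have hpre : (fun ω (i : Fin p) => S i ω) ⁻¹' Set.pi Set.univ sets
      = ⋂ i ∈ J, (Sum.elim T S i) ⁻¹' (sets' i) := by
    ext ω
    simp [hJ, Set.mem_pi, hsets']
  rw [hpre]
  rw [hindep.measure_inter_preimage_eq_mul J (fun i _ => ?_)]
  · rw [hJ, Finset.prod_map]
    apply Finset.prod_congr rfl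
    intro j _
    show P (S j ⁻¹' sets j) = ν (sets j)
    rw [← hS j, Measure.map_apply (hmS j) (hsets j)]
  · rcases i with j | j
    · exact MeasurableSet.univ
    · exact hsets j

lemma indep_Tvec_Svec (hmT : ∀ i, Measurable (T i)) (hmS : ∀ i, Measurable (S i))
    (hindep : iIndepFun (Sum.elim T S) P) :
    IndepFun (fun ω (i : Fin m) => T i ω) (fun ω (i : Fin p) => S i ω) P := by
  set A : Finset (Fin m ⊕ Fin p) := Finset.univ.map ⟨Sum.inl, Sum.inl_injective⟩ with hA
  set B : Finset (Fin m ⊕ Fin p) := Finset.univ.map ⟨Sum.inr, Sum.inr_injective⟩ with hB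
  have hd : Disjoint A B := by
    rw [Finset.disjoint_left]
    rintro x hx hy
    simp [hA] at hx
    simp [hB] at hy
    obtain ⟨a, ha⟩ := hx
    obtain ⟨b, hb⟩ := hy
    rw [← ha] at hb
    exact Sum.inl_ne_inr hb.symm
  have hIF := hindep.indepFun_finset A B hd (elim_measurable T S hmT hmS)
  have hφA : Measurable fun (g : A → α) (i : Fin m) => g ⟨Sum.inl i, by simp [hA]⟩ :=
    measurable_pi_lambda _ fun i => measurable_pi_apply _
  have hφB : Measurable fun (g : B → α) (i : Fin p) => g ⟨Sum.inr i, by simp [hB]⟩ :=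
    measurable_pi_lambda _ fun i => measurable_pi_apply _
  exact hIF.comp hφA hφB

end indep

/-- Acceptance bound of Theorem 1, per-ε high-probability form. The training pairs
`T i` are i.i.d. from `P_D(· | B₋)` (misclassified examples assigned class `ℓj`), the
pairs `S i` are i.i.d. from `P_D(· | B₊)` (correctly classified examples of class `ℓj`),
all jointly independent, and `θ = G_m†(Δ)` is the empirical `Δ`-quantile of the
projected misclassified sample. With probability at least `1 - 2 exp(-2 p ε²)` over
both training samples, the true positive-class CDF at `θ` is at most
`min(1, F_p(θ) + ε)`; equivalently, the conditional probability that a fresh sample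
with `F(u) = ℓj` and `ℓ = ℓj` satisfies `h(Φ(u)) > θ` is at least
`1 - min(1, F_p(θ) + ε)`. -/
theorem stmt7 {U : Type*} [MeasurableSpace U]
    {L : Type*} [Fintype L] [MeasurableSpace L] [DiscreteMeasurableSpace L]
    {d : ℕ} (F : U → L) (Φ : U → (Fin d → ℝ)) (h : (Fin d → ℝ) → ℝ)
    (hF : Measurable F) (hΦ : Measurable Φ) (hh : Measurable h)
    (PD : Measure (U × L)) [IsProbabilityMeasure PD]
    (ℓj : L)
    (hBneg : 0 < PD {q : U × L | F q.1 = ℓj ∧ q.2 ≠ ℓj})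
    (hBpos : 0 < PD {q : U × L | F q.1 = ℓj ∧ q.2 = ℓj})
    {m p : ℕ} {Ω : Type*} [MeasurableSpace Ω] (P : Measure Ω) [IsProbabilityMeasure P]
    (T : Fin m → Ω → U × L) (S : Fin p → Ω → U × L)
    (hmT : ∀ i, Measurable (T i)) (hmS : ∀ i, Measurable (S i))
    (hindep : iIndepFun (Sum.elim T S) P)
    (hT : ∀ i, Measure.map (T i) P = PD[|{q : U × L | F q.1 = ℓj ∧ q.2 ≠ ℓj}])
    (hS : ∀ i, Measure.map (S i) P = PD[|{q : U × L | F q.1 = ℓj ∧ q.2 = ℓj}])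
    (Δ : ℝ) (hΔ : Δ ∈ Set.Ioo (0 : ℝ) 1)
    (ε : ℝ) (hε : ε ∈ Set.Ioc (0 : ℝ) 1) :
    (P {ω |
        ((PD[|{q : U × L | F q.1 = ℓj ∧ q.2 = ℓj}])
            {q : U × L | h (Φ q.1) ≤ pinv (ecdf fun i => h (Φ (T i ω).1)) Δ}).toReal
          ≤ min 1 (ecdf (fun i => h (Φ (S i ω).1))
              (pinv (ecdf fun i => h (Φ (T i ω).1)) Δ) + ε) ∧
        ((PD[|{q : U × L | F q.1 = ℓj ∧ q.2 = ℓj}])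
            {q : U × L | h (Φ q.1) > pinv (ecdf fun i => h (Φ (T i ω).1)) Δ}).toReal
          ≥ 1 - min 1 (ecdf (fun i => h (Φ (S i ω).1))
              (pinv (ecdf fun i => h (Φ (T i ω).1)) Δ) + ε)}).toReal
      ≥ 1 - 2 * Real.exp (-2 * p * ε ^ 2) := by
  classical
  set Bp : Set (U × L) := {q : U × L | F q.1 = ℓj ∧ q.2 = ℓj} with hBp
  set ν : Measure (U × L) := PD[|Bp] with hν
  haveI hνP : IsProbabilityMeasure ν := cond_isProbabilityMeasure hBpos.ne'
  set g : U × L → ℝ := fun q => h (Φ q.1) with hgdef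
  have hg : Measurable g := hh.comp (hΦ.comp measurable_fst)
  have htr1 : ∀ s : Set (U × L), (ν s).toReal ≤ 1 := fun s =>
    ENNReal.toReal_le_of_le_ofReal zero_le_one (by simpa using prob_le_one (μ := ν) (s := s))
  rcases Nat.eq_zero_or_pos p with hp | hp
  · subst hp
    have he : Real.exp (-2 * ((0:ℕ):ℝ) * ε ^ 2) = 1 := by norm_num
    rw [ge_iff_le, he]
    have := ENNReal.toReal_nonneg (a := P {ω |
        ((PD[|{q : U × L | F q.1 = ℓj ∧ q.2 = ℓj}])
            {q : U × L | h (Φ q.1) ≤ pinv (ecdf fun i => h (Φ (T i ω).1)) Δ}).toReal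
          ≤ min 1 (ecdf (fun i => h (Φ (S i ω).1))
              (pinv (ecdf fun i => h (Φ (T i ω).1)) Δ) + ε) ∧
        ((PD[|{q : U × L | F q.1 = ℓj ∧ q.2 = ℓj}])
            {q : U × L | h (Φ q.1) > pinv (ecdf fun i => h (Φ (T i ω).1)) Δ}).toReal
          ≥ 1 - min 1 (ecdf (fun i => h (Φ (S i ω).1))
              (pinv (ecdf fun i => h (Φ (T i ω).1)) Δ) + ε)})
    linarith
  · set θt : (Fin m → U × L) → ℝ := fun t => pinv (ecdf fun i => g (t i)) Δ with hθt
    have hθtm : Measurable θt := by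
      have h9 := measurable_pinv_ecdf (β := Fin m → U × L) (m := m) (fun i t => g (t i))
        (fun i => hg.comp (measurable_pi_apply i)) hΔ.1 hΔ.2.le
      exact h9
    set Tvec : Ω → (Fin m → U × L) := fun ω i => T i ω with hTvec
    set Svec : Ω → (Fin p → U × L) := fun ω i => S i ω with hSvec
    have hTvecm : Measurable Tvec := measurable_pi_lambda _ hmT
    have hSvecm : Measurable Svec := measurable_pi_lambda _ hmS
    set qf : ℝ → ℝ := fun c => (ν {x | g x ≤ c}).toReal with hqf
    have hqfm : Measurable qf := by
      apply Monotone.measurable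
      intro c c' hcc'
      exact ENNReal.toReal_mono (measure_ne_top _ _)
        (measure_mono fun x hx => le_trans hx hcc')
    set C : Set ((Fin m → U × L) × (Fin p → U × L)) :=
      {ts | ecdf (fun i => g (ts.2 i)) (θt ts.1) + ε < qf (θt ts.1)} with hC
    have hCm : MeasurableSet C := by
      apply measurableSet_lt
      · apply Measurable.add _ measurable_const
        simp only [ecdf]
        apply Measurable.const_mul
        apply Finset.measurable_sum
        intro i _
        exact Measurable.ite
          (measurableSet_le (hg.comp ((measurable_pi_apply i).comp measurable_snd))
            (hθtm.comp measurable_fst)) measurable_const measurable_const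
      · exact hqfm.comp (hθtm.comp measurable_fst)
    set E : Set Ω := (fun ω => (Tvec ω, Svec ω)) ⁻¹' C with hE
    have hpairm : Measurable fun ω => (Tvec ω, Svec ω) := hTvecm.prodMk hSvecm
    have hEm : MeasurableSet E := hpairm hCm
    have hmap : Measure.map (fun ω => (Tvec ω, Svec ω)) P
        = (Measure.map Tvec P).prod (Measure.map Svec P) :=
      (indepFun_iff_map_prod_eq_prod_map_map hTvecm.aemeasurable hSvecm.aemeasurable).mp
        (indep_Tvec_Svec P T S hmT hmS hindep)
    haveI : IsProbabilityMeasure (Measure.map Tvec P) :=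
      Measure.isProbabilityMeasure_map hTvecm.aemeasurable
    have hSpi : Measure.map Svec P = Measure.pi fun _ : Fin p => ν :=
      map_Svec_eq_pi P T S hmT hmS hindep ν (fun i => (hS i).trans (by rw [hν, hBp]))
    have hPE : P E ≤ ENNReal.ofReal (Real.exp (-2 * p * ε ^ 2)) := by
      rw [hE, ← Measure.map_apply hpairm hCm, hmap, hSpi, Measure.prod_apply hCm]
      calc ∫⁻ t, (Measure.pi fun _ : Fin p => ν) (Prod.mk t ⁻¹' C) ∂(Measure.map Tvec P)
          ≤ ∫⁻ _, ENNReal.ofReal (Real.exp (-2 * p * ε ^ 2)) ∂(Measure.map Tvec P) := by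
            apply lintegral_mono
            intro t
            exact hoeffding_slice ν hp hg (θt t) ε hε.1
        _ = ENNReal.ofReal (Real.exp (-2 * p * ε ^ 2)) := by simp
    have hsub : Eᶜ ⊆ {ω |
        ((PD[|{q : U × L | F q.1 = ℓj ∧ q.2 = ℓj}])
            {q : U × L | h (Φ q.1) ≤ pinv (ecdf fun i => h (Φ (T i ω).1)) Δ}).toReal
          ≤ min 1 (ecdf (fun i => h (Φ (S i ω).1))
              (pinv (ecdf fun i => h (Φ (T i ω).1)) Δ) + ε) ∧
        ((PD[|{q : U × L | F q.1 = ℓj ∧ q.2 = ℓj}])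
            {q : U × L | h (Φ q.1) > pinv (ecdf fun i => h (Φ (T i ω).1)) Δ}).toReal
          ≥ 1 - min 1 (ecdf (fun i => h (Φ (S i ω).1))
              (pinv (ecdf fun i => h (Φ (T i ω).1)) Δ) + ε)} := by
      intro ω hω
      have hω' : ¬ (ecdf (fun i => g (Svec ω i)) (θt (Tvec ω)) + ε < qf (θt (Tvec ω))) := hω
      have hle : qf (θt (Tvec ω)) ≤ ecdf (fun i => g (Svec ω i)) (θt (Tvec ω)) + ε :=
        not_lt.mp hω'
      have hconj1 : (ν {x : U × L | g x ≤ θt (Tvec ω)}).toReal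
          ≤ min 1 (ecdf (fun i => g (Svec ω i)) (θt (Tvec ω)) + ε) :=
        le_min (htr1 _) hle
      refine ⟨hconj1, ?_⟩
      have hAm : MeasurableSet {x : U × L | g x ≤ θt (Tvec ω)} := hg measurableSet_Iic
      have hcompl : (ν ({x : U × L | g x ≤ θt (Tvec ω)}ᶜ)).toReal
          = 1 - (ν {x : U × L | g x ≤ θt (Tvec ω)}).toReal := by
        rw [measure_compl hAm (measure_ne_top _ _),
          ENNReal.toReal_sub_of_le (measure_mono (Set.subset_univ _)) (measure_ne_top _ _)]
        simp
      have hseteq : {q : U × L | h (Φ q.1) > pinv (ecdf fun i => h (Φ (T i ω).1)) Δ}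
          = {x : U × L | g x ≤ θt (Tvec ω)}ᶜ := by
        ext q
        simp only [Set.mem_setOf_eq, Set.mem_compl_iff, not_le]
        exact Iff.rfl
      show ((PD[|{q : U × L | F q.1 = ℓj ∧ q.2 = ℓj}])
            {q : U × L | h (Φ q.1) > pinv (ecdf fun i => h (Φ (T i ω).1)) Δ}).toReal
          ≥ 1 - min 1 (ecdf (fun i => h (Φ (S i ω).1))
              (pinv (ecdf fun i => h (Φ (T i ω).1)) Δ) + ε)
      rw [hseteq]
      show (ν ({x : U × L | g x ≤ θt (Tvec ω)}ᶜ)).toReal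
          ≥ 1 - min 1 (ecdf (fun i => g (Svec ω i)) (θt (Tvec ω)) + ε)
      rw [hcompl]
      linarith [hconj1]
    have hEc : (P Eᶜ).toReal = 1 - (P E).toReal := by
      rw [measure_compl hEm (measure_ne_top P E),
        ENNReal.toReal_sub_of_le (measure_mono (Set.subset_univ _)) (measure_ne_top _ _)]
      simp
    have hPEr : (P E).toReal ≤ Real.exp (-2 * p * ε ^ 2) :=
      ENNReal.toReal_le_of_le_ofReal (Real.exp_pos _).le hPE
    refine le_trans ?_ (ENNReal.toReal_mono (measure_ne_top P _) (measure_mono hsub))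
    rw [hEc]
    have := Real.exp_pos (-2 * (p : ℝ) * ε ^ 2)
    linarith
end
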